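/- Let d ≥ 1 and let S be a real symmetric (d+2)×(d+2) matrix whose last row and last column are identically zero and whose leading (d+1)×(d+1) principal submatrix S' has zero diagonal and all off-diagonal entries equal to ±1. Let λ be the minimum eigenvalue of S'. If there exist μ ∈ ℝ and a real symmetric (d+2)×(d+2) matrix X such that I + μS + X ∈ E_{d+2,d}, X_{ij} = 0 whenever i = j or S_{ij} ≠ 0, and -μ ≤ X_{ij} ≤ μ for all i,j, then 1 + μλ = 0. -/

import Mathlib

open Matrix

noncomputable section

/-- `E_{n,d}`: real symmetric PSD `n×n` matrices with unit diagonal and rank at most `d`. -/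
def memE (n d : ℕ) (G : Matrix (Fin n) (Fin n) ℝ) : Prop :=
  G.PosSemidef ∧ (∀ i, G i i = 1) ∧ G.rank ≤ d

/-- Coherence `μ(G) = max_{i ≠ j} |G i j|`. -/
def coh {n : ℕ} (G : Matrix (Fin n) (Fin n) ℝ) : ℝ :=
  sSup {x : ℝ | ∃ i j : Fin n, i ≠ j ∧ x = |G i j|}

/-- `μ_{n,d} = inf { μ(G) : G ∈ E_{n,d} }`. -/
def muMin (n d : ℕ) : ℝ :=
  sInf {x : ℝ | ∃ G : Matrix (Fin n) (Fin n) ℝ, memE n d G ∧ x = coh G}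

/-- Signed permutation matrices. -/
def IsSignedPerm {n : ℕ} (P : Matrix (Fin n) (Fin n) ℝ) : Prop :=
  ∃ (σ : Equiv.Perm (Fin n)) (ε : Fin n → ℝ),
    (∀ i, ε i = 1 ∨ ε i = -1) ∧ ∀ i j, P i j = if j = σ i then ε i else 0

/-- Lemma `eig`: if the subprogram for `S ∈ 𝒮₁` is feasible with value `μ`,
then `1 + μλ = 0`, where `λ` is the minimum eigenvalue of the leading principal submatrix. -/
theorem lemma_eig (d : ℕ) (hd : 1 ≤ d)
    (S : Matrix (Fin (d + 2)) (Fin (d + 2)) ℝ) (hSsymm : S.IsSymm)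
    (hlast : ∀ i, S i (Fin.last (d + 1)) = 0 ∧ S (Fin.last (d + 1)) i = 0)
    (S' : Matrix (Fin (d + 1)) (Fin (d + 1)) ℝ)
    (hS' : ∀ i j, S' i j = S i.castSucc j.castSucc)
    (hdiag : ∀ i, S' i i = 0)
    (hoff : ∀ i j, i ≠ j → S' i j = 1 ∨ S' i j = -1)
    (lam : ℝ)
    (hlam : Module.End.HasEigenvalue (Matrix.toLin' S') lam)
    (hlam_min : ∀ t : ℝ, Module.End.HasEigenvalue (Matrix.toLin' S') t → lam ≤ t)
    (μ : ℝ) (X : Matrix (Fin (d + 2)) (Fin (d + 2)) ℝ) (hXsymm : X.IsSymm)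
    (hmem : memE (d + 2) d (1 + μ • S + X))
    (hsupp : ∀ i j : Fin (d + 2), (i = j ∨ S i j ≠ 0) → X i j = 0)
    (hbound : ∀ i j : Fin (d + 2), -μ ≤ X i j ∧ X i j ≤ μ) :
    1 + μ * lam = 0 := by
  obtain ⟨hpsd, -, hrank⟩ := hmem
  set G := 1 + μ • S + X with hG
  set A : Matrix (Fin (d + 1)) (Fin (d + 1)) ℝ := 1 + μ • S' with hA
  -- A is the leading principal submatrix of G
  have hAG : ∀ i j, A i j = G i.castSucc j.castSucc := by
    intro i j
    have hX : X i.castSucc j.castSucc = 0 := by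
      rcases eq_or_ne i j with rfl | h
      · exact hsupp _ _ (Or.inl rfl)
      · refine hsupp _ _ (Or.inr ?_)
        rw [← hS']
        rcases hoff i j h with h1 | h1 <;> rw [h1] <;> norm_num
    simp only [hA, hG, Matrix.add_apply, Matrix.smul_apply, Matrix.one_apply, hS', hX,
      Fin.castSucc_inj, smul_eq_mul, add_zero]
  -- quadratic form of A is nonneg
  have hApsd : ∀ v : Fin (d + 1) → ℝ, 0 ≤ v ⬝ᵥ A.mulVec v := by
    intro v
    have h0 := hpsd.dotProduct_mulVec_nonneg (Fin.snoc v 0 : Fin (d + 2) → ℝ)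
    have heq : (star (Fin.snoc v 0 : Fin (d + 2) → ℝ)) ⬝ᵥ G.mulVec (Fin.snoc v 0)
        = v ⬝ᵥ A.mulVec v := by
      simp only [star_trivial, dotProduct, mulVec]
      rw [Fin.sum_univ_castSucc]
      simp only [Fin.snoc_castSucc, Fin.snoc_last, zero_mul, add_zero]
      refine Finset.sum_congr rfl fun i _ => ?_
      congr 1
      rw [Fin.sum_univ_castSucc]
      simp only [Fin.snoc_castSucc, Fin.snoc_last, mul_zero, add_zero]
      exact Finset.sum_congr rfl fun j _ => by rw [hAG]
    rw [heq] at h0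
    exact h0
  -- A is singular
  have hdet : A.det = 0 := by
    by_contra h
    set P : Matrix (Fin (d + 1)) (Fin (d + 2)) ℝ :=
      Matrix.of fun i j => if j = i.castSucc then 1 else 0 with hP
    have hPGP : P * G * Pᵀ = A := by
      ext i j
      simp only [Matrix.mul_apply, Matrix.transpose_apply, hP, Matrix.of_apply, ite_mul, one_mul,
        zero_mul, mul_ite, mul_one, mul_zero, Finset.sum_ite_eq', Finset.mem_univ, if_true]
      exact (hAG i j).symm
    have hrankA : A.rank ≤ d := by
      rw [← hPGP]
      calc (P * G * Pᵀ).rank ≤ (P * G).rank := Matrix.rank_mul_le_left _ _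
        _ ≤ G.rank := Matrix.rank_mul_le_right _ _
        _ ≤ d := hrank
    have : A.rank = d + 1 := by
      have := Matrix.rank_of_isUnit A ((Matrix.isUnit_iff_isUnit_det A).mpr
        (isUnit_iff_ne_zero.mpr h))
      simpa using this
    omega
  -- μ > 0
  have hμ0 : 0 ≤ μ := by
    have h1 := (hbound 0 0).1
    have h2 : X 0 0 = 0 := hsupp _ _ (Or.inl rfl)
    linarith [h2 ▸ h1]
  have hμne : μ ≠ 0 := by
    intro h
    rw [hA, h, zero_smul, add_zero, Matrix.det_one] at hdet
    norm_num at hdet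
  have hμ : 0 < μ := lt_of_le_of_ne hμ0 (Ne.symm hμne)
  -- kernel vector of A gives eigenvalue -1/μ of S'
  obtain ⟨v, hv0, hv⟩ := (Matrix.exists_mulVec_eq_zero_iff).mpr hdet
  have hvS : S'.mulVec v = (-(1 / μ)) • v := by
    have : v + μ • S'.mulVec v = 0 := by
      have := hv
      rwa [hA, Matrix.add_mulVec, Matrix.one_mulVec, Matrix.smul_mulVec] at this
    funext i
    have h1 := congrFun this i
    simp only [Pi.add_apply, Pi.smul_apply, Pi.zero_apply, smul_eq_mul] at h1 ⊢
    field_simp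
    linarith
  have heig : Module.End.HasEigenvalue (Matrix.toLin' S') (-(1 / μ)) := by
    refine Module.End.hasEigenvalue_of_hasEigenvector ⟨?_, hv0⟩
    rw [Module.End.mem_eigenspace_iff, Matrix.toLin'_apply, hvS]
  have hle : lam ≤ -(1 / μ) := hlam_min _ heig
  -- eigenvector of lam gives 1 + μ * lam ≥ 0
  obtain ⟨w, hw⟩ := hlam.exists_hasEigenvector
  have hwS : S'.mulVec w = lam • w := by
    have := hw.apply_eq_smul
    rwa [Matrix.toLin'_apply] at this
  have hq := hApsd w
  have hq2 : w ⬝ᵥ A.mulVec w = (1 + μ * lam) * (w ⬝ᵥ w) := by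
    rw [hA, Matrix.add_mulVec, Matrix.one_mulVec, Matrix.smul_mulVec, hwS,
      dotProduct_add, dotProduct_smul, dotProduct_smul]
    simp [smul_eq_mul]
    ring
  have hww : 0 < w ⬝ᵥ w := by
    have h1 : 0 ≤ w ⬝ᵥ w := Finset.sum_nonneg fun i _ => mul_self_nonneg _
    have h2 : w ⬝ᵥ w ≠ 0 := fun h => hw.2 (dotProduct_self_eq_zero.mp h)
    exact lt_of_le_of_ne h1 (Ne.symm h2)
  rw [hq2] at hq
  have hge : 0 ≤ 1 + μ * lam := by nlinarith [hq, hww]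
  have : μ * lam ≤ μ * (-(1 / μ)) := mul_le_mul_of_nonneg_left hle (le_of_lt hμ)
  have h3 : μ * (-(1 / μ)) = -1 := by field_simp
  linarith
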